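/- Let M, N be positive integers, r, λ̂₁₀, λ̂₀₀ > 0 reals, and β* real. Suppose λ̂_{m,n} + λ̌_{m,n} = r(1 - (m+n)/(M+N)) for all 0 ≤ m ≤ M, 0 ≤ n ≤ N, with λ̌_{0,n} = ((N-n)/M) λ̂₀₀ for 0 ≤ n ≤ N, λ̂_{m,0} = ((M-m)/M) λ̂₀₀ for 0 ≤ m ≤ M, and the recursion ((m+n)/M) λ̂₀₀ = (m/(M-m+1)) λ̂_{m-1,n} e^{-nβ*} + (n/(N-n+1)) λ̌_{m,n-1} e^{-mβ*} for 1 ≤ m+n, with λ̂₀₀ > 0. Then evaluating at (m,n) = (1,1) and (m,n) = (2,0) forces λ̌_{1,0} = (N/M) λ̂₀₀ (2e^{β*} − 1) and λ̌_{1,0} = (N/M) λ̂₀₀, hence β* = 0. -/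

import Mathlib

open Real

/-- Model II coefficient system: the stated system of equations for λ̂_{m,n}, λ̌_{m,n}
forces β* = 0 (via (m,n) = (1,1) and (2,0)). -/
theorem model_II_system_forces_beta_zero
    (M N : ℕ) (hM : 2 ≤ M) (hN : 2 ≤ N)
    (r β : ℝ) (hr : 0 < r)
    (lamh lamc : ℕ → ℕ → ℝ)
    (hlam00 : 0 < lamh 0 0)
    (hlam10 : 0 < lamc 1 0)
    (hsum : ∀ m ≤ M, ∀ n ≤ N,
      lamh m n + lamc m n = r * (1 - ((m : ℝ) + n) / ((M : ℝ) + N)))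
    (h0n : ∀ n ≤ N, lamc 0 n = (((N : ℝ) - n) / M) * lamh 0 0)
    (hm0 : ∀ m ≤ M, lamh m 0 = (((M : ℝ) - m) / M) * lamh 0 0)
    (hrec : ∀ m ≤ M, ∀ n ≤ N, 1 ≤ m + n →
      ((m : ℝ) + n) / M * lamh 0 0 =
        (m : ℝ) / ((M : ℝ) - m + 1) * (if m = 0 then 0 else lamh (m - 1) n) * exp (-(n : ℝ) * β)
        + (n : ℝ) / ((N : ℝ) - n + 1) * (if n = 0 then 0 else lamc m (n - 1)) * exp (-(m : ℝ) * β)) :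
    lamc 1 0 = (N : ℝ) / M * lamh 0 0 * (2 * exp β - 1) ∧
    lamc 1 0 = (N : ℝ) / M * lamh 0 0 ∧
    β = 0 := by
  have hM0 : (M : ℝ) ≠ 0 := by positivity
  have hN0 : (N : ℝ) ≠ 0 := by positivity
  have hMN : (M : ℝ) + N ≠ 0 := by positivity
  have hM1 : 1 ≤ M := le_trans (by norm_num) hM
  have hN1 : 1 ≤ N := le_trans (by norm_num) hN
  set lam := lamh 0 0 with hlamdef
  -- r in terms of lam
  have h00 := hsum 0 (Nat.zero_le M) 0 (Nat.zero_le N)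
  have hc00 := h0n 0 (Nat.zero_le N)
  push_cast at h00 hc00
  have hrval : r = ((M : ℝ) + N) / M * lam := by
    rw [hc00] at h00
    field_simp at h00 ⊢
    rw [← hlamdef] at h00
    have h00' : (lam * ((M:ℝ) + N) - M * r) * ((M:ℝ) + N) = 0 := by linear_combination h00
    rcases mul_eq_zero.mp h00' with h | h
    · linarith
    · exact absurd h hMN
  have hrk : ∀ k : ℝ, r * (1 - k / ((M : ℝ) + N)) = (((M : ℝ) + N - k) / M) * lam := by
    intro k
    rw [hrval]
    field_simp
  have hk1 : r * (1 - ((M : ℝ) + N)⁻¹) = (((M : ℝ) + N - 1) / M) * lam := by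
    rw [← one_div]; exact hrk 1
  -- lamh 0 1 = lam
  have h01s := hsum 0 (Nat.zero_le M) 1 hN1
  have hc01 := h0n 1 hN1
  push_cast at h01s hc01
  have h01 : lamh 0 1 = lam := by
    norm_num at h01s
    rw [hc01, hk1] at h01s
    have haux : ((M : ℝ) + N - 1) / M * lam - ((N : ℝ) - 1) / M * lam = lam := by
      field_simp
      ring
    linarith
  -- second conclusion
  have h10s := hsum 1 hM1 0 (Nat.zero_le N)
  have hh10 := hm0 1 hM1
  push_cast at h10s hh10
  have second : lamc 1 0 = (N : ℝ) / M * lam := by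
    norm_num at h10s
    rw [hh10, hk1] at h10s
    have haux : ((M : ℝ) + N - 1) / M * lam - ((M : ℝ) - 1) / M * lam = (N : ℝ) / M * lam := by
      field_simp
      ring
    linarith
  -- recursion at (1,1)
  have e11 := hrec 1 hM1 1 hN1 (by norm_num)
  simp only [if_neg one_ne_zero, Nat.sub_self, Nat.cast_one] at e11
  rw [h01] at e11
  have hprod : exp β * exp (-β) = 1 := by rw [← exp_add]; simp
  -- clear denominators in e11
  have e11' : (1 + 1) * lam * ((M : ℝ) * N)
      = (lam * exp (-β) * N + lamc 1 0 * exp (-β) * M) * M := by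
    have hM1' : (M : ℝ) - 1 + 1 = M := by ring
    have hN1' : (N : ℝ) - 1 + 1 = N := by ring
    rw [hM1', hN1'] at e11
    field_simp at e11
    linear_combination (M : ℝ) * e11
  have h2 : lamc 1 0 * (exp (-β) * M) = (2 * lam - lam * exp (-β)) * N := by
    have hcancel : (M : ℝ) * (lamc 1 0 * (exp (-β) * M))
        = (M : ℝ) * ((2 * lam - lam * exp (-β)) * N) := by linarith [e11']
    exact mul_left_cancel₀ hM0 hcancel
  have h3 : lamc 1 0 * M = (2 * lam * exp β - lam) * N := by
    linear_combination exp β * h2 - (lamc 1 0 * (M : ℝ) + lam * (N : ℝ)) * hprod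
  have first : lamc 1 0 = (N : ℝ) / M * lam * (2 * exp β - 1) := by
    field_simp
    linarith [h3]
  refine ⟨first, second, ?_⟩
  have hpos : 0 < (N : ℝ) / M * lam := by positivity
  have hE : exp β = 1 := by
    have h1 : (N : ℝ) / M * lam * (2 * exp β - 1) = (N : ℝ) / M * lam * 1 := by
      rw [← first, second, mul_one]
    have := mul_left_cancel₀ (ne_of_gt hpos) h1
    linarith
  have := Real.exp_eq_exp.mp (hE.trans Real.exp_zero.symm)
  exact this
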